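/- arXiv:2206.05674 — 3 statements merged into one kernel-verified Lean document; each statement's English description precedes it below -/
import Mathlib

section
/- For every closed interval [x, x+ℓ] ⊂ ℝ with 0 < ℓ, there exist a ∈ {0,1,2}, k ∈ ℤ and m ∈ ℤ such that [x, x+ℓ] ⊆ [2^{-k}(m + a/3), 2^{-k}(m + a/3 + 1)) and 2^{-k} ≤ 6ℓ. -/
theorem stmt0 (x ℓ : ℝ) (hℓ : 0 < ℓ) :
    ∃ a : ℕ, a ≤ 2 ∧ ∃ k m : ℤ,
      Set.Icc x (x + ℓ) ⊆
        Set.Ico ((2:ℝ) ^ (-k) * ((m : ℝ) + (a : ℝ) / 3))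
          ((2:ℝ) ^ (-k) * ((m : ℝ) + (a : ℝ) / 3 + 1)) ∧
      (2:ℝ) ^ (-k) ≤ 6 * ℓ := by
  have h6 : (0:ℝ) < 6 * ℓ := by linarith
  set n : ℤ := Int.log 2 (6 * ℓ) with hn
  have hL2 : (2:ℝ) ^ n ≤ 6 * ℓ := Int.zpow_log_le_self (by norm_num) h6
  have hL1' : 6 * ℓ < (2:ℝ) ^ (n + 1) := Int.lt_zpow_succ_log_self (by norm_num) (6 * ℓ)
  have hLpos : (0:ℝ) < (2:ℝ) ^ n := by positivity
  have hL1 : 3 * ℓ < (2:ℝ) ^ n := by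
    have h : (2:ℝ) ^ (n + 1) = 2 * 2 ^ n := by
      rw [zpow_add_one₀ (by norm_num : (2:ℝ) ≠ 0)]; ring
    nlinarith
  set L : ℝ := (2:ℝ) ^ n with hLdef
  set j : ℤ := ⌊3 * x / L⌋ with hj
  refine ⟨(j % 3).toNat, ?_, -n, j / 3, ?_, by simpa using hL2⟩
  · have := Int.emod_lt_of_pos j (by norm_num : (0:ℤ) < 3)
    have := Int.emod_nonneg j (by norm_num : (3:ℤ) ≠ 0)
    omega
  · have ha : ((j % 3).toNat : ℝ) = ((j % 3 : ℤ) : ℝ) := by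
      exact_mod_cast Int.toNat_of_nonneg (Int.emod_nonneg j (by norm_num))
    have hcenter : ((j / 3 : ℤ) : ℝ) + ((j % 3).toNat : ℝ) / 3 = (j : ℝ) / 3 := by
      rw [ha]
      have h2 : (3:ℝ) * ((j / 3 : ℤ) : ℝ) + ((j % 3 : ℤ) : ℝ) = (j : ℝ) := by
        exact_mod_cast Int.mul_ediv_add_emod j 3
      linarith
    rw [neg_neg, hcenter]
    have hfloor1 : (j:ℝ) ≤ 3 * x / L := Int.floor_le _
    have hfloor2 : 3 * x / L < (j:ℝ) + 1 := Int.lt_floor_add_one _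
    have hlo : (j:ℝ) * L ≤ 3 * x := by
      rw [le_div_iff₀ hLpos] at hfloor1; linarith
    have hhi : 3 * x < ((j:ℝ) + 1) * L := by
      rw [div_lt_iff₀ hLpos] at hfloor2; linarith
    intro y hy
    obtain ⟨hy1, hy2⟩ := hy
    constructor
    · nlinarith
    · nlinarith
end

section
/- Let (X, μ) be a measure space and T a map sending measurable functions f : X → ℂ to measurable functions Tf : X → [0, ∞], satisfying (a) T(|f|^u) = (Tf)^u pointwise for every u > 0, and (b) ∫ (Tf)^p dμ ≤ (p/(p-1))^p ∫ |f|^p dμ for every p > 1 and every measurable f. Then ∫ Tf dμ ≤ e ∫ |f| dμ for every measurable f. -/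
open scoped ENNReal NNReal

open Filter Topology

theorem stmt7 {X : Type*} [MeasurableSpace X] (μ : MeasureTheory.Measure X)
    (T : (X → ℂ) → X → ℝ≥0∞)
    (ha : ∀ u : ℝ, 0 < u → ∀ f : X → ℂ, Measurable f →
      T (fun x => ((‖f x‖ ^ u : ℝ) : ℂ)) = fun x => (T f x) ^ u)
    (hb : ∀ p : ℝ, 1 < p → ∀ f : X → ℂ, Measurable f →
      ∫⁻ x, (T f x) ^ p ∂μ ≤
        ENNReal.ofReal ((p / (p - 1)) ^ p) * ∫⁻ x, ((‖f x‖₊ : ℝ≥0∞)) ^ p ∂μ) :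
    ∀ f : X → ℂ, Measurable f →
      ∫⁻ x, T f x ∂μ ≤ ENNReal.ofReal (Real.exp 1) * ∫⁻ x, (‖f x‖₊ : ℝ≥0∞) ∂μ := by
  intro f hf
  -- key estimate for each p > 1
  have key : ∀ p : ℝ, 1 < p → ∫⁻ x, T f x ∂μ ≤
      ENNReal.ofReal ((p / (p - 1)) ^ p) * ∫⁻ x, (‖f x‖₊ : ℝ≥0∞) ∂μ := by
    intro p hp
    have hp0 : (0:ℝ) < p := lt_trans one_pos hp
    have hpne : p ≠ 0 := ne_of_gt hp0
    set g : X → ℂ := fun x => ((‖f x‖ ^ (1/p) : ℝ) : ℂ) with hg_def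
    have hg : Measurable g := by
      exact Complex.measurable_ofReal.comp ((hf.norm).pow measurable_const)
    -- T f = (T g)^p pointwise
    have hgnorm : ∀ x, ‖g x‖ = ‖f x‖ ^ (1/p) := by
      intro x
      rw [hg_def]
      simp only [Complex.norm_real, Real.norm_eq_abs]
      exact abs_of_nonneg (Real.rpow_nonneg (norm_nonneg _) _)
    have hTf : T f = fun x => (T g x) ^ p := by
      have h1 := ha p hp0 g hg
      have h2 := ha 1 one_pos f hf
      have hfun : (fun x => ((‖g x‖ ^ p : ℝ) : ℂ)) = (fun x => ((‖f x‖ ^ (1:ℝ) : ℝ) : ℂ)) := by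
        funext x
        rw [hgnorm x, ← Real.rpow_mul (norm_nonneg _), one_div, inv_mul_cancel₀ hpne]
      rw [hfun, h2] at h1
      have : (fun x => T f x ^ (1:ℝ)) = T f := by
        funext x; rw [ENNReal.rpow_one]
      rw [this] at h1
      exact h1
    -- nnnorm of g
    have hgn : ∀ x, (‖g x‖₊ : ℝ≥0∞) ^ p = (‖f x‖₊ : ℝ≥0∞) := by
      intro x
      have h1 : (‖g x‖₊ : ℝ≥0∞) = (‖f x‖₊ : ℝ≥0∞) ^ (1/p) := by
        rw [← ENNReal.coe_rpow_of_nonneg _ (by positivity : (0:ℝ) ≤ 1/p)]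
        congr 1
        ext
        rw [coe_nnnorm, hgnorm x, NNReal.coe_rpow, coe_nnnorm]
      rw [h1, ← ENNReal.rpow_mul, one_div, inv_mul_cancel₀ hpne, ENNReal.rpow_one]
    calc ∫⁻ x, T f x ∂μ = ∫⁻ x, (T g x) ^ p ∂μ := by rw [hTf]
      _ ≤ ENNReal.ofReal ((p / (p - 1)) ^ p) * ∫⁻ x, ((‖g x‖₊ : ℝ≥0∞)) ^ p ∂μ :=
          hb p hp g hg
      _ = ENNReal.ofReal ((p / (p - 1)) ^ p) * ∫⁻ x, (‖f x‖₊ : ℝ≥0∞) ∂μ := by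
          congr 1
          exact MeasureTheory.lintegral_congr fun x => hgn x
  -- limit as p → ∞
  have hreal : Tendsto (fun p : ℝ => (p / (p - 1)) ^ p) atTop (𝓝 (Real.exp 1)) := by
    have h1 : Tendsto (fun t : ℝ => (1 + 1/t) ^ t) atTop (𝓝 (Real.exp 1)) := by
      simpa using Real.tendsto_one_add_div_rpow_exp 1
    have hsub : Tendsto (fun p : ℝ => p - 1) atTop atTop :=
      tendsto_atTop_add_const_right _ _ tendsto_id
    have h2 : Tendsto (fun p : ℝ => (1 + 1/(p-1)) ^ (p-1)) atTop (𝓝 (Real.exp 1)) :=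
      h1.comp hsub
    have h3 : Tendsto (fun p : ℝ => 1 + 1/(p-1)) atTop (𝓝 1) := by
      have : Tendsto (fun p : ℝ => 1/(p-1)) atTop (𝓝 0) := by
        simpa [one_div, Function.comp_def] using tendsto_inv_atTop_zero.comp hsub
      simpa using tendsto_const_nhds.add this
    have h4 : Tendsto (fun p : ℝ => (1 + 1/(p-1)) ^ (p-1) * (1 + 1/(p-1))) atTop
        (𝓝 (Real.exp 1)) := by
      have := h2.mul h3
      simpa using this
    refine h4.congr' ?_
    filter_upwards [eventually_gt_atTop (1:ℝ)] with p hp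
    have hp1 : (0:ℝ) < p - 1 := by linarith
    have hbase : (0:ℝ) < 1 + 1/(p-1) := by positivity
    have heq : p / (p - 1) = 1 + 1/(p-1) := by field_simp; ring
    rw [heq]
    have hx := Real.rpow_add hbase (p-1) 1
    rw [Real.rpow_one] at hx
    norm_num at hx
    rw [one_div]
    exact hx.symm
  have hENN : Tendsto (fun p : ℝ => ENNReal.ofReal ((p / (p - 1)) ^ p) *
      ∫⁻ x, (‖f x‖₊ : ℝ≥0∞) ∂μ) atTop
      (𝓝 (ENNReal.ofReal (Real.exp 1) * ∫⁻ x, (‖f x‖₊ : ℝ≥0∞) ∂μ)) := by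
    apply ENNReal.Tendsto.mul_const
    · exact (ENNReal.continuous_ofReal.tendsto _).comp hreal
    · exact Or.inl (ENNReal.ofReal_pos.mpr (Real.exp_pos 1)).ne'
  exact ge_of_tendsto hENN (eventually_atTop.2 ⟨2, fun p hp => key p (by linarith)⟩)
end

section
/- Let L ∈ ℕ, let x₀ ∈ ℝⁿ, and let φ ∈ C^{L+1}(ℝⁿ) with ‖∂^α φ‖_∞ ≤ 1 for all multi-indices α with |α| = L + 1. Let a ∈ L¹(ℝⁿ) satisfy ∫ a(y) (y - x₀)^β dy = 0 for every multi-index β with |β| ≤ L, and assume ∫ |a(y)| ‖y - x₀‖^{L+1} dy < ∞. Then there is a constant C depending only on n and L such that for every t > 0 and every x ∈ ℝⁿ: | t^{-n} ∫ a(y) φ((x - y)/t) dy | ≤ C t^{-n-L-1} ∫ |a(y)| ‖y - x₀‖^{L+1} dy. -/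
open MeasureTheory Set Finset

section helpers
variable {E : Type*} [NormedAddCommGroup E] [NormedSpace ℝ E]

lemma my_iteratedFDeriv_comp_add_left (m : ℕ) (f : E → ℝ) (hf : ContDiff ℝ m f) (z : E) :
    ∀ i ≤ m, ∀ u, iteratedFDeriv ℝ i (fun v => f (z + v)) u = iteratedFDeriv ℝ i f (z + u) := by
  intro i him
  induction i with
  | zero => intro u; ext1 v; simp
  | succ i IH =>
      have hi : i ≤ m := le_trans (Nat.le_succ i) him
      have hIH := IH hi
      intro u
      have hdiff : ∀ w, DifferentiableAt ℝ (iteratedFDeriv ℝ i f) w := fun w =>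
        (hf.differentiable_iteratedFDeriv (by exact_mod_cast him) w)
      have hfd : fderiv ℝ (fun v => iteratedFDeriv ℝ i f (z + v)) u
          = fderiv ℝ (iteratedFDeriv ℝ i f) (z + u) := by
        have h1 : HasFDerivAt (fun v : E => z + v) (ContinuousLinearMap.id ℝ E) u := by
          simpa using (hasFDerivAt_id u).const_add z
        have h2 := (hdiff (z + u)).hasFDerivAt.comp u h1
        exact h2.fderiv
      rw [iteratedFDeriv_succ_eq_comp_left, iteratedFDeriv_succ_eq_comp_left]
      simp only [Function.comp_apply]
      congr 1
      have : fderiv ℝ (iteratedFDeriv ℝ i (fun v => f (z + v))) u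
          = fderiv ℝ (fun v => iteratedFDeriv ℝ i f (z + v)) u := by
        apply Filter.EventuallyEq.fderiv_eq
        exact Filter.Eventually.of_forall fun v => hIH v
      rw [this, hfd]

lemma my_taylor_bound (m : ℕ) (φ : E → ℝ) (hφ : ContDiff ℝ (m + 1 : ℕ) φ)
    (hb : ∀ x, ‖iteratedFDeriv ℝ (m + 1) φ x‖ ≤ 1) (z h : E) :
    |φ (z + h) - ∑ k ∈ Finset.range (m + 1),
        ((k.factorial : ℝ)⁻¹) * iteratedFDeriv ℝ k φ z (fun _ => h)| ≤ ‖h‖ ^ (m + 1) := by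
  set g : ℝ →L[ℝ] E := ContinuousLinearMap.smulRight (ContinuousLinearMap.id ℝ ℝ) h with hg
  have hgapp : ∀ s : ℝ, g s = s • h := fun s => by simp [hg]
  set φ₁ : E → ℝ := fun v => φ (z + v) with hφ₁def
  have hφ₁ : ContDiff ℝ (m + 1 : ℕ) φ₁ := hφ.comp (contDiff_const.add contDiff_id)
  set ψ : ℝ → ℝ := fun s => φ (z + s • h) with hψdef
  have hψg : ψ = φ₁ ∘ g := by funext s; simp [hψdef, hφ₁def, hgapp]
  have hψ : ContDiff ℝ (m + 1 : ℕ) ψ := by rw [hψg]; exact hφ₁.comp_continuousLinearMap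
  -- iterated derivatives of ψ
  have key : ∀ i ≤ m + 1, ∀ s : ℝ,
      iteratedDeriv i ψ s = iteratedFDeriv ℝ i φ (z + s • h) (fun _ => h) := by
    intro i hi s
    rw [iteratedDeriv_eq_iteratedFDeriv, hψg,
      g.iteratedFDeriv_comp_right hφ₁ s (by exact_mod_cast hi)]
    simp only [ContinuousMultilinearMap.compContinuousLinearMap_apply]
    rw [my_iteratedFDeriv_comp_add_left (m+1) φ hφ z i hi (g s)]
    simp [hgapp]
  -- within = global
  have hwithin : ∀ i ≤ m + 1, ∀ s ∈ Icc (0:ℝ) 1,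
      iteratedDerivWithin i ψ (Icc (0:ℝ) 1) s = iteratedDeriv i ψ s := by
    intro i hi s hs
    rw [iteratedDerivWithin_eq_iteratedFDerivWithin, iteratedDeriv_eq_iteratedFDeriv]
    congr 1
    have := (((contDiff_iff_ftaylorSeries.mp hψ)).hasFTaylorSeriesUpToOn (Icc (0:ℝ) 1)
      ).eq_iteratedFDerivWithin_of_uniqueDiffOn (by exact_mod_cast hi)
      (uniqueDiffOn_Icc one_pos) hs
    exact this.symm
  have hbound : ∀ s ∈ Icc (0:ℝ) 1,
      ‖iteratedDerivWithin (m+1) ψ (Icc (0:ℝ) 1) s‖ ≤ ‖h‖ ^ (m + 1) := by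
    intro s hs
    rw [hwithin (m+1) le_rfl s hs, key (m+1) le_rfl s]
    calc ‖iteratedFDeriv ℝ (m+1) φ (z + s • h) (fun _ => h)‖
        ≤ ‖iteratedFDeriv ℝ (m+1) φ (z + s • h)‖ * ∏ _i : Fin (m+1), ‖h‖ :=
          (iteratedFDeriv ℝ (m+1) φ (z + s • h)).le_opNorm _
      _ ≤ 1 * ‖h‖ ^ (m + 1) := by
          rw [Finset.prod_const, Finset.card_univ, Fintype.card_fin]
          exact mul_le_mul_of_nonneg_right (hb _) (pow_nonneg (norm_nonneg _) _)
      _ = ‖h‖ ^ (m + 1) := one_mul _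
  have hmain := taylor_mean_remainder_bound (f := ψ) (a := 0) (b := 1) (x := 1) (n := m)
    zero_le_one (hψ.contDiffOn) (by norm_num) hbound
  have hψ1 : ψ 1 = φ (z + h) := by simp [hψdef]
  have htay : taylorWithinEval ψ m (Icc (0:ℝ) 1) 0 1 =
      ∑ k ∈ Finset.range (m + 1),
        ((k.factorial : ℝ)⁻¹) * iteratedFDeriv ℝ k φ z (fun _ => h) := by
    rw [taylor_within_apply]
    refine Finset.sum_congr rfl fun k hk => ?_
    have hk' : k ≤ m + 1 := le_of_lt (by simpa using Finset.mem_range.mp hk)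
    rw [hwithin k hk' 0 (by norm_num), key k hk' 0]
    simp
  rw [hψ1, htay] at hmain
  calc |φ (z + h) - ∑ k ∈ Finset.range (m + 1),
        ((k.factorial : ℝ)⁻¹) * iteratedFDeriv ℝ k φ z (fun _ => h)|
      ≤ ‖h‖ ^ (m + 1) * (1 - 0) ^ (m + 1) / m.factorial := hmain
    _ ≤ ‖h‖ ^ (m + 1) := by
        rw [sub_zero, one_pow, mul_one]
        apply div_le_self (pow_nonneg (norm_nonneg _) _)
        exact_mod_cast Nat.one_le_iff_ne_zero.mpr (Nat.factorial_ne_zero m)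

end helpers

lemma my_decomp (n : ℕ) (v : EuclideanSpace ℝ (Fin n)) :
    v = ∑ i, v i • EuclideanSpace.single i (1:ℝ) := by
  have h := (EuclideanSpace.basisFun (Fin n) ℝ).sum_repr v
  simp only [EuclideanSpace.basisFun_repr, EuclideanSpace.basisFun_apply] at h
  exact h.symm
lemma my_expand (n k : ℕ) (M : ContinuousMultilinearMap ℝ (fun _ : Fin k => EuclideanSpace ℝ (Fin n)) ℝ)
    (v : EuclideanSpace ℝ (Fin n)) :
    M (fun _ => v) = ∑ r : Fin k → Fin n,
      (∏ j, v (r j)) * M (fun j => EuclideanSpace.single (r j) (1:ℝ)) := by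
  classical
  conv_lhs => rw [my_decomp n v]
  rw [M.map_sum (g := fun (_ : Fin k) (i : Fin n) => v i • EuclideanSpace.single i (1:ℝ))]
  refine Finset.sum_congr rfl fun r _ => ?_
  have := M.map_smul_univ (fun j => v (r j)) (fun j => EuclideanSpace.single (r j) (1:ℝ))
  simpa [smul_eq_mul] using this
lemma my_prod_count (n k : ℕ) (r : Fin k → Fin n) (w : Fin n → ℝ) :
    ∏ j : Fin k, w (r j) = ∏ i : Fin n, (w i) ^ ((Finset.univ.filter fun j => r j = i).card) := by
  classical
  have hpc := Finset.prod_comp (s := (Finset.univ : Finset (Fin k))) w r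
  rw [hpc]
  refine Finset.prod_subset (Finset.subset_univ _) fun i _ hi => ?_
  have : (Finset.univ.filter fun j => r j = i) = ∅ := by
    rw [Finset.filter_eq_empty_iff]
    intro j _ hj
    exact hi (Finset.mem_image.mpr ⟨j, Finset.mem_univ j, hj⟩)
  rw [this]
  simp
lemma my_count_sum (n k : ℕ) (r : Fin k → Fin n) :
    ∑ i : Fin n, (Finset.univ.filter fun j => r j = i).card = k := by
  classical
  rw [← Finset.card_eq_sum_card_fiberwise (fun j _ => Finset.mem_univ (r j))]
  simp
lemma my_coord_le (n : ℕ) (v : EuclideanSpace ℝ (Fin n)) (i : Fin n) : |v i| ≤ ‖v‖ := by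
  have := abs_real_inner_le_norm (EuclideanSpace.single i (1:ℝ)) v
  simpa [EuclideanSpace.inner_single_left] using this

theorem stmt17 (n L : ℕ) :
    ∃ C : ℝ, 0 < C ∧
      ∀ (φ : EuclideanSpace ℝ (Fin n) → ℝ), ContDiff ℝ (L + 1 : ℕ) φ →
        (∀ x, ‖iteratedFDeriv ℝ (L + 1) φ x‖ ≤ 1) →
        ∀ (a : EuclideanSpace ℝ (Fin n) → ℝ) (x₀ : EuclideanSpace ℝ (Fin n)),
          Integrable a →
          (∀ β : Fin n → ℕ, (∑ i, β i) ≤ L →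
            ∫ y, a y * ∏ i, (y i - x₀ i) ^ (β i) = 0) →
          Integrable (fun y => |a y| * ‖y - x₀‖ ^ (L + 1)) →
          ∀ t : ℝ, 0 < t → ∀ x : EuclideanSpace ℝ (Fin n),
            |(t ^ n)⁻¹ * ∫ y, a y * φ (t⁻¹ • (x - y))| ≤
              C * (t ^ (n + L + 1))⁻¹ * ∫ y, |a y| * ‖y - x₀‖ ^ (L + 1) := by
  classical
  refine ⟨1, one_pos, ?_⟩
  intro φ hφ hb a x₀ ha hmom hInt t ht x
  set z : EuclideanSpace ℝ (Fin n) := t⁻¹ • (x - x₀) with hz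
  set h : EuclideanSpace ℝ (Fin n) → EuclideanSpace ℝ (Fin n) := fun y => t⁻¹ • (x₀ - y) with hh
  have hzh : ∀ y, t⁻¹ • (x - y) = z + h y := by
    intro y
    rw [hz, hh, ← smul_add]
    congr 1
    abel
  set S : EuclideanSpace ℝ (Fin n) → ℝ := fun y =>
    ∑ k ∈ Finset.range (L + 1), ((k.factorial : ℝ)⁻¹) * iteratedFDeriv ℝ k φ z (fun _ => h y)
    with hS
  have hnormh : ∀ y, ‖h y‖ = t⁻¹ * ‖y - x₀‖ := by
    intro y
    rw [hh]
    simp only [norm_smul, Real.norm_eq_abs, abs_inv, abs_of_pos ht, norm_sub_rev]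
  -- pointwise Taylor estimate
  have htay : ∀ y, |φ (t⁻¹ • (x - y)) - S y| ≤ (t⁻¹) ^ (L+1) * ‖y - x₀‖ ^ (L+1) := by
    intro y
    rw [hzh y]
    refine (my_taylor_bound L φ hφ hb z (h y)).trans (le_of_eq ?_)
    rw [hnormh y, mul_pow]
  -- integrability of a times monomials
  have hr1 : ∀ β : Fin n → ℕ, (∑ i, β i) ≤ L + 1 →
      Integrable (fun y => a y * ∏ i, (y i - x₀ i) ^ (β i)) := by
    intro β hβ
    have hcont : Continuous fun y : EuclideanSpace ℝ (Fin n) => ∏ i, (y i - x₀ i) ^ (β i) := by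
      refine continuous_finset_prod _ fun i _ => Continuous.pow ?_ _
      fun_prop
    have hmeas : AEStronglyMeasurable (fun y => a y * ∏ i, (y i - x₀ i) ^ β i) volume :=
      ha.aestronglyMeasurable.mul hcont.aestronglyMeasurable
    refine Integrable.mono' (g := fun y => |a y| + |a y| * ‖y - x₀‖ ^ (L+1))
      (ha.abs.add hInt) hmeas (Filter.Eventually.of_forall fun y => ?_)
    have h1 : |∏ i, (y i - x₀ i) ^ β i| ≤ ‖y - x₀‖ ^ (∑ i, β i) := by
      rw [abs_prod, ← Finset.prod_pow_eq_pow_sum]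
      refine Finset.prod_le_prod (fun i _ => abs_nonneg _) fun i _ => ?_
      rw [abs_pow]
      refine pow_le_pow_left₀ (abs_nonneg _) ?_ _
      have : y i - x₀ i = (y - x₀) i := by simp [PiLp.sub_apply]
      rw [this]
      exact my_coord_le n (y - x₀) i
    have h2 : ‖y - x₀‖ ^ (∑ i, β i) ≤ 1 + ‖y - x₀‖ ^ (L+1) := by
      rcases le_or_gt ‖y - x₀‖ 1 with hc | hc
      · have := pow_le_one₀ (norm_nonneg _) hc (n := ∑ i, β i)
        nlinarith [pow_nonneg (norm_nonneg (y - x₀)) (L+1)]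
      · have := pow_le_pow_right₀ hc.le hβ
        nlinarith
    rw [Real.norm_eq_abs, abs_mul]
    calc |a y| * |∏ i, (y i - x₀ i) ^ β i| ≤ |a y| * (1 + ‖y - x₀‖ ^ (L+1)) :=
          mul_le_mul_of_nonneg_left (h1.trans h2) (abs_nonneg _)
      _ = |a y| + |a y| * ‖y - x₀‖ ^ (L+1) := by ring
  -- each Taylor-polynomial term integrates to zero against a
  have hSk : ∀ k, k ≤ L →
      Integrable (fun y => a y * ((k.factorial : ℝ)⁻¹ * iteratedFDeriv ℝ k φ z (fun _ => h y))) ∧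
      ∫ y, a y * ((k.factorial : ℝ)⁻¹ * iteratedFDeriv ℝ k φ z (fun _ => h y)) = 0 := by
    intro k hk
    have hfun : (fun y => a y * ((k.factorial : ℝ)⁻¹ * iteratedFDeriv ℝ k φ z (fun _ => h y)))
        = fun y => ∑ r : Fin k → Fin n,
            ((k.factorial : ℝ)⁻¹ * ((t⁻¹) ^ k * (-1 : ℝ) ^ k *
              iteratedFDeriv ℝ k φ z (fun j => EuclideanSpace.single (r j) (1:ℝ)))) *
            (a y * ∏ i, (y i - x₀ i) ^ ((Finset.univ.filter fun j => r j = i).card)) := by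
      funext y
      rw [my_expand n k (iteratedFDeriv ℝ k φ z) (h y), Finset.mul_sum, Finset.mul_sum]
      refine Finset.sum_congr rfl fun r _ => ?_
      have h1 : ∀ j : Fin k, (h y) (r j) = t⁻¹ * (-1 * (y (r j) - x₀ (r j))) := by
        intro j
        rw [hh]
        simp only [PiLp.smul_apply, PiLp.sub_apply, smul_eq_mul]
        ring
      have hprod : ∏ j, (h y) (r j)
          = (t⁻¹) ^ k * (-1:ℝ) ^ k *
            ∏ i, (y i - x₀ i) ^ ((Finset.univ.filter fun j => r j = i).card) := by
        rw [Finset.prod_congr rfl (fun j _ => h1 j), Finset.prod_mul_distrib,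
          Finset.prod_mul_distrib, Finset.prod_const, Finset.prod_const, Finset.card_univ,
          Fintype.card_fin, my_prod_count n k r (fun i => y i - x₀ i)]
        ring
      rw [hprod]
      ring
    have hβ : ∀ r : Fin k → Fin n,
        (∑ i, (Finset.univ.filter fun j => r j = i).card) ≤ L := by
      intro r
      rw [my_count_sum n k r]
      exact hk
    constructor
    · rw [hfun]
      exact integrable_finset_sum _ fun r _ =>
        ((hr1 _ ((hβ r).trans (Nat.le_succ L)))).const_mul _
    · rw [hfun, integral_finset_sum _ fun r _ =>
        ((hr1 _ ((hβ r).trans (Nat.le_succ L)))).const_mul _]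
      refine Finset.sum_eq_zero fun r _ => ?_
      rw [integral_const_mul, hmom _ (hβ r), mul_zero]
  -- a * S is integrable with integral zero
  have hSfun : (fun y => a y * S y) = fun y => ∑ k ∈ Finset.range (L+1),
      a y * ((k.factorial : ℝ)⁻¹ * iteratedFDeriv ℝ k φ z (fun _ => h y)) := by
    funext y
    rw [hS, Finset.mul_sum]
  have hSint : Integrable (fun y => a y * S y) := by
    rw [hSfun]
    exact integrable_finset_sum _ fun k hk =>
      (hSk k (Nat.lt_succ_iff.mp (Finset.mem_range.mp hk))).1
  have hSzero : ∫ y, a y * S y = 0 := by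
    rw [hSfun, integral_finset_sum _ fun k hk =>
      (hSk k (Nat.lt_succ_iff.mp (Finset.mem_range.mp hk))).1]
    exact Finset.sum_eq_zero fun k hk => (hSk k (Nat.lt_succ_iff.mp (Finset.mem_range.mp hk))).2
  -- the remainder
  have hRle : ∀ y, |a y * (φ (t⁻¹ • (x - y)) - S y)| ≤
      (t⁻¹) ^ (L+1) * (|a y| * ‖y - x₀‖ ^ (L+1)) := by
    intro y
    rw [abs_mul]
    calc |a y| * |φ (t⁻¹ • (x - y)) - S y| ≤ |a y| * ((t⁻¹) ^ (L+1) * ‖y - x₀‖ ^ (L+1)) :=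
          mul_le_mul_of_nonneg_left (htay y) (abs_nonneg _)
      _ = (t⁻¹) ^ (L+1) * (|a y| * ‖y - x₀‖ ^ (L+1)) := by ring
  have hScont : Continuous S := by
    rw [hS]
    refine continuous_finset_sum _ fun k _ => Continuous.mul continuous_const ?_
    refine (iteratedFDeriv ℝ k φ z).cont.comp (continuous_pi fun _ => ?_)
    show Continuous fun y => t⁻¹ • (x₀ - y)
    fun_prop
  have hRmeas : AEStronglyMeasurable (fun y => a y * (φ (t⁻¹ • (x - y)) - S y)) volume := by
    refine ha.aestronglyMeasurable.mul (Continuous.aestronglyMeasurable (Continuous.sub ?_ hScont))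
    exact hφ.continuous.comp (by fun_prop)
  have hRint : Integrable (fun y => a y * (φ (t⁻¹ • (x - y)) - S y)) := by
    refine Integrable.mono' (hInt.const_mul ((t⁻¹) ^ (L+1))) hRmeas
      (Filter.Eventually.of_forall fun y => ?_)
    simpa only [Real.norm_eq_abs] using hRle y
  have hgeq : (fun y => a y * φ (t⁻¹ • (x - y)))
      = fun y => a y * S y + a y * (φ (t⁻¹ • (x - y)) - S y) := by
    funext y
    ring
  have hInteg : ∫ y, a y * φ (t⁻¹ • (x - y)) = ∫ y, a y * (φ (t⁻¹ • (x - y)) - S y) := by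
    rw [hgeq, integral_add hSint hRint, hSzero, zero_add]
  have habs : |∫ y, a y * (φ (t⁻¹ • (x - y)) - S y)| ≤
      (t⁻¹) ^ (L+1) * ∫ y, |a y| * ‖y - x₀‖ ^ (L+1) := by
    calc |∫ y, a y * (φ (t⁻¹ • (x - y)) - S y)|
        ≤ ∫ y, |a y * (φ (t⁻¹ • (x - y)) - S y)| := by
          simpa only [Real.norm_eq_abs] using
            norm_integral_le_integral_norm (fun y => a y * (φ (t⁻¹ • (x - y)) - S y))
      _ ≤ ∫ y, (t⁻¹) ^ (L+1) * (|a y| * ‖y - x₀‖ ^ (L+1)) :=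
          integral_mono hRint.abs (hInt.const_mul _) fun y => hRle y
      _ = (t⁻¹) ^ (L+1) * ∫ y, |a y| * ‖y - x₀‖ ^ (L+1) := integral_const_mul _ _
  rw [abs_mul, abs_inv, abs_pow, abs_of_pos ht, hInteg]
  calc (t ^ n)⁻¹ * |∫ y, a y * (φ (t⁻¹ • (x - y)) - S y)|
      ≤ (t ^ n)⁻¹ * ((t⁻¹) ^ (L+1) * ∫ y, |a y| * ‖y - x₀‖ ^ (L+1)) :=
        mul_le_mul_of_nonneg_left habs (inv_nonneg.mpr (pow_nonneg ht.le n))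
    _ = 1 * (t ^ (n + L + 1))⁻¹ * ∫ y, |a y| * ‖y - x₀‖ ^ (L + 1) := by
        rw [inv_pow, ← mul_assoc, ← mul_inv, ← pow_add, ← add_assoc, one_mul]
end
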